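/- No universal analytic set U ⊆ ℝ² belongs to the σ-algebra generated by rectangles A × B with A ⊆ ℝ arbitrary and B ⊆ ℝ having the Baire property. -/

import Mathlib

open MeasureTheory Set Filter Topology

noncomputable def bterm (σ : ℕ → Bool) (n : ℕ) : ℝ := cond (σ n) ((1/2 : ℝ)^(n+1)) 0

lemma bterm_nonneg (σ : ℕ → Bool) (n : ℕ) : 0 ≤ bterm σ n := by
  unfold bterm; cases σ n <;> simp

lemma bterm_le (σ : ℕ → Bool) (n : ℕ) : bterm σ n ≤ (1/2:ℝ)^(n+1) := by
  unfold bterm; cases σ n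
  · simp
  · simp

lemma summable_half : Summable (fun n : ℕ => (1/2:ℝ)^(n+1)) := by
  simp_rw [pow_succ]
  exact (summable_geometric_of_lt_one (by norm_num) (by norm_num)).mul_right _

lemma bterm_summable (σ : ℕ → Bool) : Summable (bterm σ) :=
  Summable.of_nonneg_of_le (bterm_nonneg σ) (bterm_le σ) summable_half

noncomputable def beta (σ : ℕ → Bool) : ℝ := ∑' n, bterm σ n

lemma beta_continuous : Continuous beta := by
  show Continuous fun σ => ∑' n, bterm σ n
  refine continuous_tsum (u := fun n : ℕ => (1/2:ℝ)^(n+1)) ?_ summable_half ?_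
  · intro n
    exact Continuous.comp (g := fun b : Bool => cond b ((1/2:ℝ)^(n+1)) 0)
      continuous_of_discreteTopology (continuous_apply n)
  · intro n σ
    rw [Real.norm_eq_abs, abs_of_nonneg (bterm_nonneg σ n)]
    exact bterm_le σ n

noncomputable def bseq (x : ℝ) : ℕ → ℝ
  | 0 => 0
  | n+1 => if bseq x n + (1/2:ℝ)^(n+1) ≤ x then bseq x n + (1/2:ℝ)^(n+1) else bseq x n

lemma bseq_succ (x : ℝ) (n : ℕ) : bseq x (n+1) =
    if bseq x n + (1/2:ℝ)^(n+1) ≤ x then bseq x n + (1/2:ℝ)^(n+1) else bseq x n := rfl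

noncomputable def bdig (x : ℝ) (n : ℕ) : Bool := decide (bseq x n + (1/2:ℝ)^(n+1) ≤ x)

lemma bseq_partial (x : ℝ) (n : ℕ) :
    ∑ i ∈ Finset.range n, bterm (bdig x) i = bseq x n := by
  induction n with
  | zero => simp [bseq]
  | succ n ih =>
    rw [Finset.sum_range_succ, ih, bseq_succ]
    unfold bterm bdig
    by_cases h : bseq x n + (1/2:ℝ)^(n+1) ≤ x
    · rw [if_pos h, decide_eq_true h, cond_true]
    · rw [if_neg h, decide_eq_false h, cond_false, add_zero]

lemma bseq_invariant {x : ℝ} (hx : x ∈ Icc (0:ℝ) 1) (n : ℕ) :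
    bseq x n ≤ x ∧ x ≤ bseq x n + (1/2:ℝ)^n := by
  induction n with
  | zero => simpa [bseq] using hx
  | succ n ih =>
    rw [bseq_succ]
    by_cases h : bseq x n + (1/2:ℝ)^(n+1) ≤ x
    · rw [if_pos h]
      have : (1/2:ℝ)^n = (1/2:ℝ)^(n+1) + (1/2:ℝ)^(n+1) := by ring
      exact ⟨h, by linarith [ih.2]⟩
    · rw [if_neg h]
      exact ⟨ih.1, by linarith [not_le.mp h]⟩

lemma beta_surjOn {x : ℝ} (hx : x ∈ Icc (0:ℝ) 1) : ∃ σ, beta σ = x := by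
  refine ⟨bdig x, ?_⟩
  have htend : Tendsto (fun n => bseq x n) atTop (𝓝 x) := by
    have h1 : Tendsto (fun n : ℕ => x - (1/2:ℝ)^n) atTop (𝓝 x) := by
      have := tendsto_pow_atTop_nhds_zero_of_lt_one (by norm_num : (0:ℝ) ≤ 1/2)
        (by norm_num : (1/2:ℝ) < 1)
      simpa using tendsto_const_nhds.sub this
    refine tendsto_of_tendsto_of_tendsto_of_le_of_le h1 tendsto_const_nhds ?_ ?_
    · intro n; linarith [(bseq_invariant hx n).2]
    · intro n; exact (bseq_invariant hx n).1
  have := ((bterm_summable (bdig x)).hasSum_iff_tendsto_nat).mpr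
    (by simpa only [bseq_partial] using htend)
  exact this.tsum_eq

lemma countable_isMeagre {s : Set ℝ} (hs : s.Countable) : IsMeagre s := by
  rw [IsMeagre]
  have : sᶜ = ⋂ x ∈ s, ({x} : Set ℝ)ᶜ := by
    ext y
    simp only [mem_compl_iff, mem_iInter, mem_singleton_iff]
    exact ⟨fun h i hi e => h (e ▸ hi), fun h hy => h y hy rfl⟩
  rw [this]
  rw [countable_bInter_mem hs]
  intro x _
  exact residual_of_dense_open isOpen_compl_singleton (dense_compl_singleton x)

lemma not_meagre_Ioo {a b : ℝ} (h : a < b) : ¬ IsMeagre (Ioo a b) := by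
  intro hm
  rw [IsMeagre] at hm
  have hd : Dense ((Ioo a b)ᶜ : Set ℝ) := dense_of_mem_residual hm
  obtain ⟨y, hy⟩ : (Ioo a b).Nonempty := nonempty_Ioo.mpr h
  have := hd.inter_open_nonempty (Ioo a b) isOpen_Ioo ⟨y, hy⟩
  obtain ⟨z, hz1, hz2⟩ := this
  exact hz2 hz1

/-- Cantor injection into an uncountable Borel subset of ℝ. -/
lemma exists_cantor_inj {s : Set ℝ} (hmeas : MeasurableSet s) (hunc : ¬ s.Countable) :
    ∃ f : (ℕ → Bool) → ℝ, range f ⊆ s ∧ Continuous f ∧ Function.Injective f := by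
  obtain ⟨t', ht'le, hpol, hcl, -⟩ := hmeas.isClopenable
  obtain ⟨f, hfs, hfc, hfi⟩ :=
    @IsClosed.exists_nat_bool_injection_of_not_countable ℝ t' hpol s hcl hunc
  refine ⟨f, hfs, ?_, hfi⟩
  have h2 : @Continuous ℝ ℝ t' (UniformSpace.toTopologicalSpace) id :=
    continuous_id_of_le ht'le
  have h3 := @Continuous.comp (ℕ → Bool) ℝ ℝ _ t' UniformSpace.toTopologicalSpace f id h2 hfc
  exact h3

lemma countable_generate_aux {α : Type*} {S : Set (Set α)} {t : Set α}
    (h : MeasurableSet[MeasurableSpace.generateFrom S] t) :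
    ∃ T, T ⊆ S ∧ T.Countable ∧ MeasurableSet[MeasurableSpace.generateFrom T] t := by
  have h' : MeasurableSpace.GenerateMeasurable S t := h
  clear h
  induction h' with
  | basic u hu => exact ⟨{u}, singleton_subset_iff.mpr hu, countable_singleton u,
      MeasurableSpace.measurableSet_generateFrom rfl⟩
  | empty => exact ⟨∅, empty_subset _, countable_empty,
      @MeasurableSet.empty _ (MeasurableSpace.generateFrom ∅)⟩
  | compl u _ ih =>
    obtain ⟨T, h1, h2, h3⟩ := ih
    exact ⟨T, h1, h2, h3.compl⟩
  | iUnion f _ ih =>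
    choose T h1 h2 h3 using ih
    refine ⟨⋃ n, T n, iUnion_subset h1, countable_iUnion h2, MeasurableSet.iUnion fun n => ?_⟩
    exact (MeasurableSpace.generateFrom_mono (subset_iUnion T n)) _ (h3 n)

theorem stmt_3 (U : Set (ℝ × ℝ))
    (hUa : AnalyticSet U)
    (hUniv : ∀ A : Set ℝ, AnalyticSet A → ∃ x : ℝ, A = {y | (x, y) ∈ U}) :
    ¬ MeasurableSet[MeasurableSpace.generateFrom
      {R : Set (ℝ × ℝ) | ∃ (A B : Set ℝ),
        BaireMeasurableSet B ∧ R = A ×ˢ B}] U := by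
  intro hU
  set S : Set (Set (ℝ × ℝ)) := {R : Set (ℝ × ℝ) | ∃ (A B : Set ℝ),
      BaireMeasurableSet B ∧ R = A ×ˢ B} with hS
  obtain ⟨T, hTS, hTc, hTm⟩ := countable_generate_aux hU
  have hT'S : insert (∅ : Set (ℝ × ℝ)) T ⊆ S := by
    rw [insert_subset_iff]
    refine ⟨⟨∅, ∅, (MeasurableSet.empty).baireMeasurableSet, (prod_empty).symm⟩, hTS⟩
  obtain ⟨e, he⟩ := (hTc.insert ∅).exists_eq_range (insert_nonempty _ _)
  have heS : ∀ n, e n ∈ S := fun n => hT'S (he ▸ mem_range_self n)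
  choose A B hB hAB using heS
  -- sections are measurable w.r.t. the σ-algebra generated by the B n
  have hsec : ∀ x : ℝ,
      MeasurableSet[MeasurableSpace.generateFrom (range B)] {y | (x, y) ∈ U} := by
    intro x
    have hmk : @Measurable ℝ (ℝ × ℝ) (MeasurableSpace.generateFrom (range B))
        (MeasurableSpace.generateFrom (range e)) (Prod.mk x) := by
      apply @measurable_generateFrom ℝ (ℝ × ℝ) (MeasurableSpace.generateFrom (range B)) _ _
      rintro t ⟨n, rfl⟩
      rw [hAB n]
      by_cases hx : x ∈ A n
      · rw [mk_preimage_prod_right hx]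
        exact MeasurableSpace.measurableSet_generateFrom ⟨n, rfl⟩
      · rw [mk_preimage_prod_right_eq_empty hx]
        exact @MeasurableSet.empty _ (MeasurableSpace.generateFrom (range B))
    have hU' : MeasurableSet[MeasurableSpace.generateFrom (range e)] U := by
      have hle : MeasurableSpace.generateFrom T ≤ MeasurableSpace.generateFrom (range e) :=
        MeasurableSpace.generateFrom_mono (he ▸ subset_insert _ _)
      exact hle _ hTm
    exact hmk hU'
  -- open approximations of the B n
  choose O hOopen hBO using fun n => (hB n).residualEq_isOpen
  have hG0 : (⋂ n, {x : ℝ | x ∈ B n ↔ x ∈ O n}) ∈ residual ℝ := by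
    rw [countable_iInter_mem]
    intro n
    exact (hBO n).mono fun x hx => iff_of_eq hx
  obtain ⟨G, hGsub, hGδ, hGdense⟩ := mem_residual.mp hG0
  have hGmem : ∀ (n : ℕ), ∀ x ∈ G, (x ∈ B n ↔ x ∈ O n) :=
    fun n x hx => (mem_iInter.mp (hGsub hx)) n
  -- every set in the σ-algebra generated by the B n agrees with a Borel set on G
  have hVex : ∀ t : Set ℝ, MeasurableSpace.GenerateMeasurable (range B) t →
      ∃ V : Set ℝ, MeasurableSet V ∧ t ∩ G = V ∩ G := by
    intro t ht
    induction ht with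
    | basic u hu =>
      obtain ⟨n, rfl⟩ := hu
      refine ⟨O n, (hOopen n).measurableSet, ?_⟩
      ext y
      simp only [mem_inter_iff]
      exact and_congr_left fun hy => hGmem n y hy
    | empty => exact ⟨∅, MeasurableSet.empty, by simp⟩
    | compl u _ ih =>
      obtain ⟨V, h1, h2⟩ := ih
      refine ⟨Vᶜ, h1.compl, ?_⟩
      ext y
      by_cases hy : y ∈ G
      · have h3 := Set.ext_iff.mp h2 y
        simp only [mem_inter_iff, hy, and_true, mem_compl_iff] at h3 ⊢
        tauto
      · simp [hy]
    | iUnion g _ ih =>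
      choose V h1 h2 using ih
      exact ⟨⋃ n, V n, MeasurableSet.iUnion h1,
        by rw [iUnion_inter, iUnion_inter]; exact iUnion_congr h2⟩
  -- Cantor sets inside G over each integer interval
  have hGmeas : MeasurableSet G := hGδ.measurableSet
  set W : ℤ → Set ℝ := fun n => G ∩ Ioo (n : ℝ) (n + 1) with hWdef
  have hWunc : ∀ n : ℤ, ¬ (W n).Countable := by
    intro n hc
    have h1 : IsMeagre (W n) := countable_isMeagre hc
    have hGc : IsMeagre Gᶜ := by
      rw [IsMeagre, compl_compl]
      exact residual_of_dense_Gδ hGδ hGdense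
    have h2 : IsMeagre (Ioo (n : ℝ) (n + 1)) := by
      have hsub : Ioo (n : ℝ) (n + 1) ⊆ W n ∪ Gᶜ := fun y hy =>
        (em (y ∈ G)).elim (fun h => Or.inl ⟨h, hy⟩) fun h => Or.inr h
      have hm : IsMeagre (W n ∪ Gᶜ) := by
        rw [IsMeagre, compl_union]
        exact Filter.inter_mem h1 hGc
      exact hm.mono hsub
    exact not_meagre_Ioo (lt_add_one (n : ℝ)) h2
  choose f hfW hfc hfi using fun n : ℤ =>
    exists_cantor_inj (hGmeas.inter measurableSet_Ioo) (hWunc n)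
  have hrangeG : ∀ n : ℤ, range (f n) ⊆ G := fun n => (hfW n).trans inter_subset_left
  have hrangeI : ∀ n : ℤ, range (f n) ⊆ Ioo (n : ℝ) (n + 1) :=
    fun n => (hfW n).trans inter_subset_right
  have hfloor : ∀ n : ℤ, ∀ y ∈ range (f n), ⌊y⌋ = n := by
    intro n y hy
    obtain ⟨hy1, hy2⟩ := hrangeI n hy
    rw [Int.floor_eq_iff]
    exact ⟨le_of_lt hy1, by exact_mod_cast hy2⟩
  -- the diagonal analytic pieces
  set P : ℤ → Set (ℕ → Bool) := fun n => (fun σ => ((n : ℝ) + beta σ, f n σ)) ⁻¹' U with hPdef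
  have hPa : ∀ n : ℤ, AnalyticSet (P n) := fun n =>
    by haveI : PolishSpace Bool := {}; exact hUa.preimage ((continuous_const.add beta_continuous).prodMk (hfc n))
  set E : Set ℝ := ⋃ n : ℤ, f n '' P n with hEdef
  set D : Set ℝ := ⋃ n : ℤ, f n '' (P n)ᶜ with hDdef
  set C : Set ℝ := ⋃ n : ℤ, range (f n) with hCdef
  have hCmeas : MeasurableSet C :=
    MeasurableSet.iUnion fun n => (isCompact_range (hfc n)).isClosed.measurableSet
  have hCG : C ⊆ G := iUnion_subset hrangeG
  -- every analytic subset of C is Borel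
  have hkey : ∀ A' : Set ℝ, AnalyticSet A' → A' ⊆ C → MeasurableSet A' := by
    intro A' hAa hAC
    obtain ⟨x, hx⟩ := hUniv A' hAa
    obtain ⟨V, hV, hVG⟩ := hVex _ (hsec x)
    have hAV : A' = V ∩ C := by
      ext y
      constructor
      · intro hy
        have hyG : y ∈ G := hCG (hAC hy)
        have hmem : y ∈ {y | (x, y) ∈ U} ∩ G := ⟨by rw [← hx]; exact hy, hyG⟩
        rw [hVG] at hmem
        exact ⟨hmem.1, hAC hy⟩
      · rintro ⟨hyV, hyC⟩
        have hyG : y ∈ G := hCG hyC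
        have hmem : y ∈ V ∩ G := ⟨hyV, hyG⟩
        rw [← hVG] at hmem
        rw [hx]
        exact hmem.1
    rw [hAV]
    exact hV.inter hCmeas
  have hEa : AnalyticSet E :=
    AnalyticSet.iUnion fun n => (hPa n).image_of_continuous (hfc n)
  have hEme : MeasurableSet E :=
    hkey E hEa (iUnion_mono fun n => image_subset_range _ _)
  -- D = C \ E
  have hDeq : D = C \ E := by
    ext y
    simp only [hDdef, hCdef, hEdef, mem_iUnion, mem_diff]
    constructor
    · rintro ⟨n, σ, hσ, rfl⟩
      refine ⟨⟨n, mem_range_self σ⟩, ?_⟩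
      rintro ⟨m, τ, hτ, hfeq⟩
      have hmn : m = n := by
        have h1 := hfloor m (f m τ) (mem_range_self τ)
        have h2 := hfloor n (f n σ) (mem_range_self σ)
        rw [hfeq] at h1
        exact h1.symm.trans h2
      subst hmn
      have : τ = σ := hfi m hfeq
      subst this
      exact hσ hτ
    · rintro ⟨⟨n, ⟨σ, rfl⟩⟩, hnE⟩
      exact ⟨n, σ, fun hσP => hnE ⟨n, σ, hσP, rfl⟩, rfl⟩
  have hDme : MeasurableSet D := by rw [hDeq]; exact hCmeas.diff hEme
  obtain ⟨x₀, hx₀⟩ := hUniv D hDme.analyticSet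
  -- diagonalization
  obtain ⟨m, hmdef⟩ : ∃ m : ℤ, m = ⌊x₀⌋ := ⟨_, rfl⟩
  have hx₀m : x₀ - (m : ℝ) ∈ Icc (0 : ℝ) 1 := by
    rw [hmdef]
    exact ⟨by linarith [Int.floor_le x₀], by linarith [Int.lt_floor_add_one x₀]⟩
  obtain ⟨σ₀, hσ₀⟩ := beta_surjOn hx₀m
  have hgc : (m : ℝ) + beta σ₀ = x₀ := by rw [hσ₀]; ring
  have hmem : f m σ₀ ∈ D ↔ (x₀, f m σ₀) ∉ U := by
    constructor
    · intro hc
      rw [hDdef, mem_iUnion] at hc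
      obtain ⟨n, σ, hσ, hfeq⟩ := hc
      have hn : n = m := by
        have h1 := hfloor n (f n σ) (mem_range_self σ)
        have h2 := hfloor m (f m σ₀) (mem_range_self σ₀)
        rw [hfeq] at h1
        exact h1.symm.trans h2
      subst hn
      have hss : σ = σ₀ := hfi n hfeq
      subst hss
      intro hUmem
      exact hσ (by rw [hPdef, mem_preimage, hgc]; exact hUmem)
    · intro hnotU
      rw [hDdef, mem_iUnion]
      refine ⟨m, σ₀, ?_, rfl⟩
      rw [mem_compl_iff, hPdef, mem_preimage, hgc]
      exact hnotU
  have hmem2 : f m σ₀ ∈ D ↔ (x₀, f m σ₀) ∈ U := by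
    rw [hx₀]; exact Iff.rfl
  rw [hmem2] at hmem
  exact (iff_not_self hmem).elim
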